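/- Let q be a prime, let n ≥ 1, and let a, v ∈ (ℤ/qℤ)^n. Then |Pr[M_n · a = v] − q^{−n}| ≤ q^{−n} · Σ_{ℓ ∈ (ℤ/qℤ)^n, ℓ ≠ 0} ∏_{1 ≤ i < j ≤ n} |cos(2π(ℓ_i a_j + ℓ_j a_i)/q)|, where for x ∈ ℤ/qℤ the quantity cos(2πx/q) is evaluated at any integer representative of x. -/

import Mathlib

/-- The random symmetric ±1 matrix: the upper-triangular entries
(including diagonal) are determined by independent fair coin flips
`σ i j` for `i ≤ j`, and the matrix is symmetric. -/
def signMatrix (n : ℕ) (σ : Fin n → Fin n → Bool) : Matrix (Fin n) (Fin n) ℤ :=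
  fun i j => if σ (min i j) (max i j) then 1 else -1

/-- Probability, under the uniform distribution on symmetric ±1 matrices,
that the matrix satisfies `P`. -/
noncomputable def probSym (n : ℕ) (P : Matrix (Fin n) (Fin n) ℤ → Prop) : ℝ :=
  (Nat.card {σ : Fin n → Fin n → Bool // P (signMatrix n σ)} : ℝ) /
    Fintype.card (Fin n → Fin n → Bool)

section Aux

lemma addChar_map_finset_sum {A : Type*} [AddCommGroup A] (ψ : AddChar A ℂ) {ι : Type*}
    (s : Finset ι) (f : ι → A) : ψ (∑ i ∈ s, f i) = ∏ i ∈ s, ψ (f i) := by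
  classical
  induction s using Finset.cons_induction with
  | empty => simp
  | cons a s ha ih => rw [Finset.sum_cons, Finset.prod_cons, ψ.map_add_eq_mul, ih]

lemma sum_psi_mul (q : ℕ) [NeZero q] (x : ZMod q) :
    ∑ t : ZMod q, ZMod.stdAddChar (t * x) = if x = 0 then (q : ℂ) else 0 := by
  have h := AddChar.sum_mulShift x (ZMod.isPrimitive_stdAddChar q)
  simpa [ZMod.card q] using h

lemma orth_vec (n q : ℕ) [NeZero q] (w : Fin n → ZMod q) :
    ∑ ℓ : Fin n → ZMod q, ZMod.stdAddChar (∑ i, ℓ i * w i)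
      = if w = 0 then ((q : ℂ)) ^ n else 0 := by
  classical
  have h1 : ∀ ℓ : Fin n → ZMod q, ZMod.stdAddChar (∑ i, ℓ i * w i)
      = ∏ i, ZMod.stdAddChar (ℓ i * w i) := fun ℓ => addChar_map_finset_sum _ _ _
  rw [Finset.sum_congr rfl fun ℓ _ => h1 ℓ]
  rw [← Fintype.piFinset_univ, ← Finset.prod_univ_sum (fun _ => (Finset.univ : Finset (ZMod q)))
    (fun i t => ZMod.stdAddChar (t * w i))]
  rw [Finset.prod_congr rfl fun i _ => sum_psi_mul q (w i)]
  by_cases hw : w = 0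
  · simp [hw]
  · rw [if_neg hw]
    obtain ⟨i, hi⟩ : ∃ i, w i ≠ 0 := by
      by_contra h; push_neg at h; exact hw (funext h)
    exact Finset.prod_eq_zero (Finset.mem_univ i) (by simp [hi])

lemma psi_add_neg (q : ℕ) [NeZero q] (x : ZMod q) :
    ZMod.stdAddChar x + ZMod.stdAddChar (-x)
      = ((2 * Real.cos (2 * Real.pi * (x.val : ℝ) / q) : ℝ) : ℂ) := by
  set z : ℂ := ZMod.stdAddChar x with hz
  have hnorm : ‖z‖ = 1 := by
    rw [hz, ZMod.stdAddChar_apply]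
    exact Circle.norm_coe _
  have hmul : z * ZMod.stdAddChar (-x) = 1 := by
    rw [hz, ← AddChar.map_add_eq_mul]; simp
  have hinv : ZMod.stdAddChar (-x) = z⁻¹ := eq_inv_of_mul_eq_one_right hmul
  have hconj : z⁻¹ = (starRingEnd ℂ) z := Complex.inv_eq_conj hnorm
  have hre : z.re = Real.cos (2 * Real.pi * (x.val : ℝ) / q) := by
    have : z = Complex.exp (((2 * Real.pi * (x.val : ℝ) / q : ℝ) : ℂ) * Complex.I) := by
      rw [hz, ZMod.stdAddChar_apply, ZMod.toCircle_apply]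
      congr 1
      push_cast
      ring
    rw [this, Complex.exp_ofReal_mul_I_re]
  rw [hinv, hconj, Complex.add_conj, hre]

/-- Coefficient of the coin `σ p.1 p.2` in the exponent. -/
def coeff (n q : ℕ) (a ℓ : Fin n → ZMod q) (p : Fin n × Fin n) (b : Bool) : ZMod q :=
  if p.1 < p.2 then (if b then 1 else -1) * (ℓ p.1 * a p.2 + ℓ p.2 * a p.1)
  else if p.1 = p.2 then (if b then 1 else -1) * (ℓ p.1 * a p.1)
  else 0

lemma fold (n q : ℕ) (a ℓ : Fin n → ZMod q) (σ : Fin n → Fin n → Bool) :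
    ∑ p : Fin n × Fin n,
        (if σ (min p.1 p.2) (max p.1 p.2) then (1 : ZMod q) else -1) * (ℓ p.1 * a p.2)
      = ∑ p : Fin n × Fin n, coeff n q a ℓ p (σ p.1 p.2) := by
  classical
  set f : Fin n × Fin n → ZMod q :=
    fun p => (if σ (min p.1 p.2) (max p.1 p.2) then (1 : ZMod q) else -1) * (ℓ p.1 * a p.2)
      with hf
  set g : Fin n × Fin n → ZMod q := fun p => coeff n q a ℓ p (σ p.1 p.2) with hg
  have splitL : ∑ p : Fin n × Fin n, f p
      = ∑ p ∈ Finset.univ.filter (fun p : Fin n × Fin n => p.1 < p.2), f p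
        + (∑ p ∈ Finset.univ.filter (fun p : Fin n × Fin n => p.1 = p.2), f p
        + ∑ p ∈ Finset.univ.filter (fun p : Fin n × Fin n => p.2 < p.1), f p) := by
    rw [← Finset.sum_filter_add_sum_filter_not Finset.univ (fun p : Fin n × Fin n => p.1 < p.2) f]
    congr 1
    rw [← Finset.sum_filter_add_sum_filter_not
      (Finset.univ.filter (fun p : Fin n × Fin n => ¬ p.1 < p.2))
      (fun p : Fin n × Fin n => p.1 = p.2) f]
    congr 2
    · ext p; simp only [Finset.mem_filter, Finset.mem_univ, true_and, Finset.filter_filter]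
      constructor
      · rintro ⟨-, h⟩; exact h
      · intro h; exact ⟨by simp [h], h⟩
    · ext p; simp only [Finset.mem_filter, Finset.mem_univ, true_and, Finset.filter_filter]
      rw [Fin.lt_def, Fin.lt_def, Fin.ext_iff]
      omega
  have swapsum : ∑ p ∈ Finset.univ.filter (fun p : Fin n × Fin n => p.2 < p.1), f p
      = ∑ p ∈ Finset.univ.filter (fun p : Fin n × Fin n => p.1 < p.2), f p.swap := by
    apply Finset.sum_nbij' (fun p => p.swap) (fun p => p.swap) <;>
      simp [Prod.swap]
  have splitR : ∑ p : Fin n × Fin n, g p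
      = ∑ p ∈ Finset.univ.filter (fun p : Fin n × Fin n => p.1 < p.2), g p
        + ∑ p ∈ Finset.univ.filter (fun p : Fin n × Fin n => p.1 = p.2), g p := by
    rw [← Finset.sum_filter_add_sum_filter_not Finset.univ (fun p : Fin n × Fin n => p.1 < p.2) g]
    congr 1
    rw [← Finset.sum_filter_add_sum_filter_not
      (Finset.univ.filter (fun p : Fin n × Fin n => ¬ p.1 < p.2))
      (fun p : Fin n × Fin n => p.1 = p.2) g]
    have : ∑ p ∈ (Finset.univ.filter (fun p : Fin n × Fin n => ¬ p.1 < p.2)).filter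
        (fun p : Fin n × Fin n => ¬ p.1 = p.2), g p = 0 := by
      apply Finset.sum_eq_zero
      intro p hp
      simp only [Finset.mem_filter] at hp
      have h1 : ¬ p.1 < p.2 := hp.1.2
      have h2 : ¬ p.1 = p.2 := hp.2
      simp [hg, coeff, h1, h2]
    rw [this, add_zero]
    congr 1
    ext p; simp only [Finset.mem_filter, Finset.mem_univ, true_and, Finset.filter_filter]
    constructor
    · rintro ⟨-, h⟩; exact h
    · intro h; exact ⟨by simp [h], h⟩
  have h1 : ∑ p ∈ Finset.univ.filter (fun p : Fin n × Fin n => p.1 < p.2), f p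
      + ∑ p ∈ Finset.univ.filter (fun p : Fin n × Fin n => p.1 < p.2), f p.swap
      = ∑ p ∈ Finset.univ.filter (fun p : Fin n × Fin n => p.1 < p.2), g p := by
    rw [← Finset.sum_add_distrib]
    apply Finset.sum_congr rfl
    intro p hp
    simp only [Finset.mem_filter, Finset.mem_univ, true_and] at hp
    have hmin : min p.1 p.2 = p.1 := min_eq_left hp.le
    have hmax : max p.1 p.2 = p.2 := max_eq_right hp.le
    have hmin' : min p.2 p.1 = p.1 := min_eq_right hp.le
    have hmax' : max p.2 p.1 = p.2 := max_eq_left hp.le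
    simp only [hf, hg, coeff, Prod.swap, hmin, hmax, hmin', hmax', if_pos hp]
    ring
  have h2 : ∑ p ∈ Finset.univ.filter (fun p : Fin n × Fin n => p.1 = p.2), f p
      = ∑ p ∈ Finset.univ.filter (fun p : Fin n × Fin n => p.1 = p.2), g p := by
    apply Finset.sum_congr rfl
    intro p hp
    simp only [Finset.mem_filter, Finset.mem_univ, true_and] at hp
    simp [hf, hg, coeff, hp, lt_irrefl]
  rw [splitL, swapsum, splitR, ← h1, ← h2]
  ring

lemma expand (n q : ℕ) (a ℓ : Fin n → ZMod q) (σ : Fin n → Fin n → Bool) :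
    ∑ i, ℓ i * (((signMatrix n σ).map (Int.cast : ℤ → ZMod q)).mulVec a) i
      = ∑ p : Fin n × Fin n,
          (if σ (min p.1 p.2) (max p.1 p.2) then (1 : ZMod q) else -1) * (ℓ p.1 * a p.2) := by
  rw [Fintype.sum_prod_type]
  apply Finset.sum_congr rfl
  intro i _
  simp only [Matrix.mulVec, dotProduct, Matrix.map_apply, signMatrix, Finset.mul_sum,
    apply_ite (Int.cast : ℤ → ZMod q), Int.cast_one, Int.cast_neg]
  apply Finset.sum_congr rfl
  intro j _
  ring

lemma key (n q : ℕ) [NeZero q] (a v ℓ : Fin n → ZMod q) :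
    ∑ σ : Fin n → Fin n → Bool,
        ZMod.stdAddChar (∑ i, ℓ i *
          ((((signMatrix n σ).map (Int.cast : ℤ → ZMod q)).mulVec a) i - v i))
      = ZMod.stdAddChar (- ∑ i, ℓ i * v i)
        * ∏ p : Fin n × Fin n, ∑ b : Bool, ZMod.stdAddChar (coeff n q a ℓ p b) := by
  classical
  have step1 : ∀ σ : Fin n → Fin n → Bool,
      ZMod.stdAddChar (∑ i, ℓ i *
          ((((signMatrix n σ).map (Int.cast : ℤ → ZMod q)).mulVec a) i - v i))
        = ZMod.stdAddChar (- ∑ i, ℓ i * v i)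
          * ∏ p : Fin n × Fin n, ZMod.stdAddChar (coeff n q a ℓ p (σ p.1 p.2)) := by
    intro σ
    have harg : ∑ i, ℓ i *
          ((((signMatrix n σ).map (Int.cast : ℤ → ZMod q)).mulVec a) i - v i)
        = (∑ p : Fin n × Fin n, coeff n q a ℓ p (σ p.1 p.2)) + (- ∑ i, ℓ i * v i) := by
      simp only [mul_sub]
      rw [Finset.sum_sub_distrib, expand n q a ℓ σ, fold n q a ℓ σ]
      ring
    rw [harg, AddChar.map_add_eq_mul, addChar_map_finset_sum]
    ring
  rw [Finset.sum_congr rfl fun σ _ => step1 σ, ← Finset.mul_sum]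
  congr 1
  have hcurry : ∑ σ : Fin n → Fin n → Bool,
      ∏ p : Fin n × Fin n, ZMod.stdAddChar (coeff n q a ℓ p (σ p.1 p.2))
      = ∑ τ : Fin n × Fin n → Bool,
      ∏ p : Fin n × Fin n, ZMod.stdAddChar (coeff n q a ℓ p (τ p)) := by
    apply Fintype.sum_equiv (Equiv.curry (Fin n) (Fin n) Bool).symm
    intro σ
    apply Finset.prod_congr rfl
    intro p _
    rfl
  rw [hcurry, ← Fintype.piFinset_univ,
    ← Finset.prod_univ_sum (fun _ => (Finset.univ : Finset Bool))
      (fun p b => ZMod.stdAddChar (coeff n q a ℓ p b))]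

lemma factor_eval (n q : ℕ) [NeZero q] (a ℓ : Fin n → ZMod q) (p : Fin n × Fin n) :
    ‖∑ b : Bool, ZMod.stdAddChar (coeff n q a ℓ p b)‖
      ≤ if p.1 < p.2 then
          2 * |Real.cos (2 * Real.pi
            * (((ℓ p.1 * a p.2 + ℓ p.2 * a p.1 : ZMod q)).val : ℝ) / q)|
        else 2 := by
  rw [Fintype.sum_bool]
  by_cases h1 : p.1 < p.2
  · rw [if_pos h1]
    have : coeff n q a ℓ p true = (ℓ p.1 * a p.2 + ℓ p.2 * a p.1)
        ∧ coeff n q a ℓ p false = -(ℓ p.1 * a p.2 + ℓ p.2 * a p.1) := by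
      constructor <;> simp [coeff, h1]
    rw [this.1, this.2, psi_add_neg, Complex.norm_real, Real.norm_eq_abs, abs_mul]
    simp
  · rw [if_neg h1]
    by_cases h2 : p.1 = p.2
    · have : coeff n q a ℓ p true = (ℓ p.1 * a p.1)
          ∧ coeff n q a ℓ p false = -(ℓ p.1 * a p.1) := by
        constructor <;> simp [coeff, h1, h2]
      rw [this.1, this.2, psi_add_neg, Complex.norm_real, Real.norm_eq_abs, abs_mul, abs_two]
      have := Real.abs_cos_le_one (2 * Real.pi * (((ℓ p.1 * a p.1 : ZMod q)).val : ℝ) / q)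
      linarith
    · have : coeff n q a ℓ p true = 0 ∧ coeff n q a ℓ p false = 0 := by
        constructor <;> simp [coeff, h1, h2]
      rw [this.1, this.2]
      norm_num

end Aux

/-- `|Pr[M_n · a = v] - q^(-n)|` is at most
`q^(-n) Σ_{ℓ ≠ 0} ∏_{i<j} |cos(2π(ℓᵢaⱼ+ℓⱼaᵢ)/q)|`. -/
theorem fourier_error_bound (n q : ℕ) [Fact q.Prime] (hn : 1 ≤ n)
    (a v : Fin n → ZMod q) :
    |probSym n (fun M => (M.map (Int.cast : ℤ → ZMod q)).mulVec a = v)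
        - (q : ℝ) ^ (-(n : ℤ))|
      ≤ (q : ℝ) ^ (-(n : ℤ)) *
        ∑ ℓ ∈ Finset.univ.filter (fun ℓ : Fin n → ZMod q => ℓ ≠ 0),
          ∏ p ∈ Finset.univ.filter (fun p : Fin n × Fin n => p.1 < p.2),
            |Real.cos (2 * Real.pi
              * ((ℓ p.1 * a p.2 + ℓ p.2 * a p.1 : ZMod q).val : ℝ) / q)| := by
  classical
  haveI : NeZero q := ⟨(Fact.out : q.Prime).ne_zero⟩
  set P : (Fin n → Fin n → Bool) → Prop :=
    fun σ => (((signMatrix n σ).map (Int.cast : ℤ → ZMod q)).mulVec a = v) with hP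
  set K : ℕ := Fintype.card (Fin n → Fin n → Bool) with hKdef
  set c : ℕ := Nat.card {σ : Fin n → Fin n → Bool //
    (((signMatrix n σ).map (Int.cast : ℤ → ZMod q)).mulVec a = v)} with hcdef
  set T : (Fin n → ZMod q) → ℂ := fun ℓ => ∑ σ : Fin n → Fin n → Bool,
      ZMod.stdAddChar (∑ i, ℓ i *
        ((((signMatrix n σ).map (Int.cast : ℤ → ZMod q)).mulVec a) i - v i)) with hT
  set S : ℝ := ∑ ℓ ∈ Finset.univ.filter (fun ℓ : Fin n → ZMod q => ℓ ≠ 0),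
      ∏ p ∈ Finset.univ.filter (fun p : Fin n × Fin n => p.1 < p.2),
        |Real.cos (2 * Real.pi
          * ((ℓ p.1 * a p.2 + ℓ p.2 * a p.1 : ZMod q).val : ℝ) / q)| with hS
  have hprob : probSym n (fun M => (M.map (Int.cast : ℤ → ZMod q)).mulVec a = v)
      = (c : ℝ) / (K : ℝ) := rfl
  have hc : c = (Finset.univ.filter P).card := by
    rw [hcdef, Nat.card_eq_fintype_card]
    exact Fintype.card_subtype _
  -- main complex identity
  have hmain : ((q : ℂ)) ^ n * (c : ℂ) = ∑ ℓ : Fin n → ZMod q, T ℓ := by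
    have e1 : ((q : ℂ)) ^ n * (c : ℂ)
        = ∑ σ : Fin n → Fin n → Bool, (if P σ then ((q : ℂ)) ^ n else 0) := by
      rw [Finset.sum_ite, Finset.sum_const, Finset.sum_const_zero, add_zero, hc]
      push_cast [nsmul_eq_mul]
      ring
    have e2 : ∀ σ : Fin n → Fin n → Bool, (if P σ then ((q : ℂ)) ^ n else 0)
        = ∑ ℓ : Fin n → ZMod q, ZMod.stdAddChar (∑ i, ℓ i *
            ((((signMatrix n σ).map (Int.cast : ℤ → ZMod q)).mulVec a) i - v i)) := by
      intro σ
      rw [orth_vec n q (fun i =>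
        (((signMatrix n σ).map (Int.cast : ℤ → ZMod q)).mulVec a) i - v i)]
      have hiff : ((fun i =>
          (((signMatrix n σ).map (Int.cast : ℤ → ZMod q)).mulVec a) i - v i) = 0) ↔ P σ := by
        rw [hP]
        constructor
        · intro h
          funext i
          have := congrFun h i
          simp only [Pi.zero_apply, sub_eq_zero] at this
          exact this
        · intro h
          funext i
          rw [show (((signMatrix n σ).map (Int.cast : ℤ → ZMod q)).mulVec a) i = v i from
            congrFun h i]
          simp
      exact if_congr hiff.symm rfl rfl
    rw [e1, Finset.sum_congr rfl fun σ _ => e2 σ, Finset.sum_comm]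
  have hT0 : T 0 = (K : ℂ) := by
    rw [hT]
    simp only [Pi.zero_apply, zero_mul, Finset.sum_const_zero, AddChar.map_zero_eq_one,
      Finset.sum_const, Finset.card_univ, nsmul_eq_mul, mul_one, hKdef]
  have hsplit : ∑ ℓ : Fin n → ZMod q, T ℓ
      = T 0 + ∑ ℓ ∈ Finset.univ.filter (fun ℓ : Fin n → ZMod q => ℓ ≠ 0), T ℓ := by
    rw [← Finset.sum_filter_add_sum_filter_not Finset.univ
      (fun ℓ : Fin n → ZMod q => ℓ = 0) T]
    congr 1
    · rw [Finset.filter_eq']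
      simp
  have herr : ((q : ℂ)) ^ n * (c : ℂ) - (K : ℂ)
      = ∑ ℓ ∈ Finset.univ.filter (fun ℓ : Fin n → ZMod q => ℓ ≠ 0), T ℓ := by
    rw [hmain, hsplit, hT0]
    ring
  -- cardinality computations
  have hKval : K = 2 ^ (n * n) := by
    rw [hKdef]
    simp only [Fintype.card_fun, Fintype.card_bool, Fintype.card_fin]
    rw [← pow_mul, mul_comm]
  have hDcard : (Finset.univ.filter (fun p : Fin n × Fin n => p.1 < p.2)).card
      + (Finset.univ.filter (fun p : Fin n × Fin n => ¬ p.1 < p.2)).card = n * n := by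
    rw [Finset.card_filter_add_card_filter_not, Finset.card_univ,
      Fintype.card_prod, Fintype.card_fin]
  -- bound on each T ℓ
  have hTbound : ∀ ℓ : Fin n → ZMod q, ‖T ℓ‖
      ≤ (K : ℝ) * ∏ p ∈ Finset.univ.filter (fun p : Fin n × Fin n => p.1 < p.2),
          |Real.cos (2 * Real.pi
            * ((ℓ p.1 * a p.2 + ℓ p.2 * a p.1 : ZMod q).val : ℝ) / q)| := by
    intro ℓ
    simp only [hT]
    rw [key n q a v ℓ, norm_mul]
    have habs1 : ‖ZMod.stdAddChar (- ∑ i, ℓ i * v i)‖ = 1 := by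
      rw [ZMod.stdAddChar_apply]
      exact Circle.norm_coe _
    rw [habs1, one_mul, norm_prod]
    have hle : ∏ p : Fin n × Fin n,
        ‖∑ b : Bool, ZMod.stdAddChar (coeff n q a ℓ p b)‖
        ≤ ∏ p : Fin n × Fin n, (if p.1 < p.2 then
            2 * |Real.cos (2 * Real.pi
              * (((ℓ p.1 * a p.2 + ℓ p.2 * a p.1 : ZMod q)).val : ℝ) / q)|
          else 2) := by
      apply Finset.prod_le_prod
      · intro p _
        exact norm_nonneg _
      · intro p _
        exact factor_eval n q a ℓ p
    refine hle.trans (le_of_eq ?_)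
    rw [← Finset.prod_filter_mul_prod_filter_not Finset.univ
      (fun p : Fin n × Fin n => p.1 < p.2)]
    have e1 : ∏ p ∈ Finset.univ.filter (fun p : Fin n × Fin n => p.1 < p.2),
        (if p.1 < p.2 then 2 * |Real.cos (2 * Real.pi
            * (((ℓ p.1 * a p.2 + ℓ p.2 * a p.1 : ZMod q)).val : ℝ) / q)| else 2)
        = (2 : ℝ) ^ (Finset.univ.filter (fun p : Fin n × Fin n => p.1 < p.2)).card
          * ∏ p ∈ Finset.univ.filter (fun p : Fin n × Fin n => p.1 < p.2),
            |Real.cos (2 * Real.pi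
              * (((ℓ p.1 * a p.2 + ℓ p.2 * a p.1 : ZMod q)).val : ℝ) / q)| := by
      rw [Finset.prod_congr rfl (fun p hp => by
        rw [if_pos (Finset.mem_filter.mp hp).2])]
      rw [Finset.prod_mul_distrib, Finset.prod_const]
    have e2 : ∏ p ∈ Finset.univ.filter (fun p : Fin n × Fin n => ¬ p.1 < p.2),
        (if p.1 < p.2 then 2 * |Real.cos (2 * Real.pi
            * (((ℓ p.1 * a p.2 + ℓ p.2 * a p.1 : ZMod q)).val : ℝ) / q)| else 2)
        = (2 : ℝ) ^ (Finset.univ.filter (fun p : Fin n × Fin n => ¬ p.1 < p.2)).card := by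
      rw [Finset.prod_congr rfl (fun p hp => by
        rw [if_neg (Finset.mem_filter.mp hp).2])]
      rw [Finset.prod_const]
    rw [e1, e2, hKval]
    push_cast
    rw [← hDcard, pow_add]
    ring
  -- final real estimate
  have hqpos : (0 : ℝ) < (q : ℝ) := by
    have := (Fact.out : q.Prime).pos
    exact_mod_cast this
  have hKpos : (0 : ℝ) < (K : ℝ) := by
    have : 0 < K := Fintype.card_pos
    exact_mod_cast this
  have hnum : |(q : ℝ) ^ n * (c : ℝ) - (K : ℝ)| ≤ (K : ℝ) * S := by
    have hcast : (((q : ℝ) ^ n * (c : ℝ) - (K : ℝ) : ℝ) : ℂ)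
        = ((q : ℂ)) ^ n * (c : ℂ) - (K : ℂ) := by push_cast; ring
    rw [← Real.norm_eq_abs, ← Complex.norm_real, hcast, herr]
    calc ‖∑ ℓ ∈ Finset.univ.filter (fun ℓ : Fin n → ZMod q => ℓ ≠ 0), T ℓ‖
        ≤ ∑ ℓ ∈ Finset.univ.filter (fun ℓ : Fin n → ZMod q => ℓ ≠ 0),
            ‖T ℓ‖ := norm_sum_le _ _
      _ ≤ ∑ ℓ ∈ Finset.univ.filter (fun ℓ : Fin n → ZMod q => ℓ ≠ 0),
          (K : ℝ) * ∏ p ∈ Finset.univ.filter (fun p : Fin n × Fin n => p.1 < p.2),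
            |Real.cos (2 * Real.pi
              * ((ℓ p.1 * a p.2 + ℓ p.2 * a p.1 : ZMod q).val : ℝ) / q)| :=
        Finset.sum_le_sum fun ℓ _ => hTbound ℓ
      _ = (K : ℝ) * S := by rw [hS, Finset.mul_sum]
  rw [hprob]
  have hzpow : (q : ℝ) ^ (-(n : ℤ)) = ((q : ℝ) ^ n)⁻¹ := by
    rw [zpow_neg, zpow_natCast]
  rw [hzpow]
  have hqn : (0 : ℝ) < (q : ℝ) ^ n := by positivity
  have hdiff : (c : ℝ) / (K : ℝ) - ((q : ℝ) ^ n)⁻¹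
      = ((q : ℝ) ^ n * (c : ℝ) - (K : ℝ)) / ((q : ℝ) ^ n * (K : ℝ)) := by
    field_simp
  rw [hdiff, abs_div, abs_of_pos (by positivity : (0:ℝ) < (q : ℝ) ^ n * (K : ℝ))]
  rw [div_le_iff₀ (by positivity : (0:ℝ) < (q : ℝ) ^ n * (K : ℝ))]
  calc |(q : ℝ) ^ n * (c : ℝ) - (K : ℝ)| ≤ (K : ℝ) * S := hnum
    _ = ((q : ℝ) ^ n)⁻¹ * S * ((q : ℝ) ^ n * (K : ℝ)) := by
        field_simp
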